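/- Let A be a commutative non-unital C*-algebra having no multiplicative unit (there is no e ∈ A with e * a = a for all a ∈ A), let H be a complex Hilbert space, and let B be a von Neumann algebra on H (VonNeumannAlgebra H) whose elements commute pairwise. Let φ : A → B be an injective non-unital star-algebra homomorphism. Then there exists an injective star-algebra homomorphism φ̃ : 𝓜(ℂ, A) → B whose composition with the canonical embedding of A into 𝓜(ℂ, A) equals φ, and such that for every two-sided ring ideal I of B satisfying I ∩ Set.range φ = {0} one has Set.range φ̃ ∩ I = {0}. -/

import Mathlib

open MultiplierAlgebra

noncomputable section

namespace MulExt
open Set Topology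
open scoped CStarAlgebra InnerProductSpace

variable {A : Type*} [NonUnitalCStarAlgebra A]

def myOrder : PartialOrder A :=
  PartialOrder.lift (fun a : A => (a : A⁺¹)) (Unitization.inr_injective (R := ℂ))

lemma exists_sqrt (d : A) (hd : (0 : A⁺¹) ≤ (d : A⁺¹)) : ∃ s : A, star s * s = d := by
  have hsa' : IsSelfAdjoint ((d : A⁺¹)) := .of_nonneg hd
  have hsa : IsSelfAdjoint d := by
    rw [IsSelfAdjoint, ← (Unitization.inr_injective (R := ℂ)).eq_iff, Unitization.inr_star]
    exact hsa'
  have hspec : ∀ t ∈ quasispectrum ℝ d, 0 ≤ t := by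
    rw [Unitization.quasispectrum_eq_spectrum_inr' ℝ ℂ d]
    exact fun t ht => spectrum_nonneg_of_nonneg hd ht
  have hcont : ContinuousOn Real.sqrt (quasispectrum ℝ d) := Real.continuous_sqrt.continuousOn
  refine ⟨cfcₙ Real.sqrt d, ?_⟩
  have hs : IsSelfAdjoint (cfcₙ Real.sqrt d) := cfcₙ_predicate Real.sqrt d
  rw [hs.star_eq, ← cfcₙ_mul Real.sqrt Real.sqrt d hcont (by simp) hcont (by simp)]
  rw [cfcₙ_congr (f := fun t => Real.sqrt t * Real.sqrt t) (g := id)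
    (fun t ht => Real.mul_self_sqrt (hspec t ht))]
  exact cfcₙ_id ℝ d

lemma myStarOrdered : letI := myOrder (A := A); StarOrderedRing A := by
  letI := myOrder (A := A)
  refine StarOrderedRing.of_le_iff fun x y => ?_
  constructor
  · intro h
    have hd : (0 : A⁺¹) ≤ ((y - x : A) : A⁺¹) := by
      rw [Unitization.inr_sub]; exact sub_nonneg.mpr h
    obtain ⟨s, hs⟩ := exists_sqrt _ hd
    exact ⟨s, by rw [hs]; abel⟩
  · rintro ⟨s, rfl⟩
    show (x : A⁺¹) ≤ (x + star s * s : A)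
    rw [Unitization.inr_add, Unitization.inr_mul, Unitization.inr_star]
    exact le_add_of_nonneg_right (star_mul_self_nonneg _)

lemma approx_unit (s : Finset A) {ε : ℝ} (hε : 0 < ε) :
    ∃ e : A, ‖e‖ ≤ 1 ∧ ∀ a ∈ s, ‖a - e * a‖ ≤ ε := by
  letI := myOrder (A := A)
  haveI := myStarOrdered (A := A)
  have H := CStarAlgebra.increasingApproximateUnit A
  have h1 : ∀ᶠ e in CStarAlgebra.approximateUnit A, ‖e‖ ≤ 1 := H.eventually_norm
  have h2 : ∀ᶠ e in CStarAlgebra.approximateUnit A, ∀ a ∈ s, ‖a - e * a‖ ≤ ε := by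
    rw [Filter.eventually_all_finset]
    intro a ha
    have := H.tendsto_mul_right a (Metric.closedBall_mem_nhds a hε)
    filter_upwards [this] with e he
    simpa [dist_eq_norm, norm_sub_rev] using he
  haveI : (CStarAlgebra.approximateUnit A).NeBot := H.neBot
  exact ((h1.and h2).exists).imp fun e he => ⟨he.1, he.2⟩

/-- cancellation : if `x * u = x * w` for all `x` then `u = w`. -/
lemma cancel {u w : A} (h : ∀ x : A, x * u = x * w) : u = w := by
  have hz : ∀ x : A, x * (u - w) = 0 := fun x => by rw [mul_sub, sub_eq_zero]; exact h x
  have h0 : star (u - w) * (u - w) = 0 := hz _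
  have : ‖u - w‖ * ‖u - w‖ = 0 := by
    rw [← CStarRing.norm_star_mul_self, h0, norm_zero]
  rw [← sub_eq_zero, ← norm_eq_zero]
  exact (mul_self_eq_zero).mp this

lemma fst_mul_left (T : 𝓜(ℂ, A)) (e a : A) : T.fst (e * a) = T.fst e * a := by
  refine cancel fun x => ?_
  calc x * T.fst (e * a) = T.snd x * (e * a) := (T.central x (e * a)).symm
    _ = (T.snd x * e) * a := (mul_assoc _ _ _).symm
    _ = (x * T.fst e) * a := by rw [T.central]
    _ = x * (T.fst e * a) := mul_assoc _ _ _

lemma fst_eq_zero (T : 𝓜(ℂ, A)) (h : ∀ a : A, T.fst a = 0) : T = 0 := by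
  have hsnd : ∀ a : A, T.snd a = 0 := by
    intro a
    have h1 : ∀ y : A, T.snd a * y = 0 := fun y => by rw [T.central, h, mul_zero]
    have h2 : T.snd a * star (T.snd a) = 0 := h1 _
    have : ‖star (T.snd a)‖ * ‖star (T.snd a)‖ = 0 := by
      rw [← CStarRing.norm_star_mul_self, star_star, h2, norm_zero]
    have h3 : star (T.snd a) = 0 := by rw [← norm_eq_zero]; exact mul_self_eq_zero.mp this
    simpa using congrArg star h3
  refine DoubleCentralizer.ext ℂ A _ _ (Prod.ext ?_ ?_) <;>
    exact ContinuousLinearMap.ext fun a => by simp [h, hsnd]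

noncomputable section

variable {A : Type*} [NonUnitalCStarAlgebra A]
variable {H : Type*} [NormedAddCommGroup H] [InnerProductSpace ℂ H] [CompleteSpace H]
variable (ψ : A →⋆ₙₐ[ℂ] (H →L[ℂ] H))

def S : Submodule ℂ H := Submodule.span ℂ (Set.range fun p : A × H => ψ p.1 p.2)

def K : Submodule ℂ H := (S ψ).topologicalClosure

lemma mem_S (a : A) (ξ : H) : ψ a ξ ∈ S ψ := Submodule.subset_span ⟨(a, ξ), rfl⟩

lemma S_le_K : S ψ ≤ K ψ := Submodule.le_topologicalClosure _

lemma mem_K (a : A) (ξ : H) : ψ a ξ ∈ K ψ := S_le_K ψ (mem_S ψ a ξ)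

instance : CompleteSpace (K ψ) := (Submodule.isClosed_topologicalClosure _).completeSpace_coe

def pm : ((A × H) →₀ ℂ) →ₗ[ℂ] H := Finsupp.linearCombination ℂ (fun p : A × H => ψ p.1 p.2)

def qm (T : 𝓜(ℂ, A)) : ((A × H) →₀ ℂ) →ₗ[ℂ] H :=
  Finsupp.linearCombination ℂ (fun p : A × H => ψ (T.fst p.1) p.2)

lemma range_pm : LinearMap.range (pm ψ) = S ψ := by
  rw [pm, Finsupp.range_linearCombination]; rfl

lemma psi_norm_le (a : A) : ‖ψ a‖ ≤ ‖a‖ := NonUnitalStarAlgHom.norm_apply_le ψ a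

/-- Key estimate. -/
lemma key (T : 𝓜(ℂ, A)) (v : (A × H) →₀ ℂ) : ‖qm ψ T v‖ ≤ ‖T.fst‖ * ‖pm ψ v‖ := by
  set M : ℝ := ∑ p ∈ v.support, ‖v p‖ * (‖T.fst‖ * ‖p.2‖) with hM
  have hM0 : 0 ≤ M := Finset.sum_nonneg fun p _ => by positivity
  have hmain : ∀ ε : ℝ, 0 < ε → ‖qm ψ T v‖ ≤ ‖T.fst‖ * ‖pm ψ v‖ + ε * M := by
    intro ε hε
    classical
    obtain ⟨e, he1, he2⟩ := approx_unit (v.support.image Prod.fst) hε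
    -- ψ (T.fst e) applied to pm v
    have hterm : ∀ p ∈ v.support,
        ‖v p • (ψ (T.fst p.1) p.2 - ψ (T.fst e) (ψ p.1 p.2))‖ ≤ ε * (‖v p‖ * (‖T.fst‖ * ‖p.2‖)) := by
      intro p hp
      have he2' : ‖p.1 - e * p.1‖ ≤ ε := he2 p.1 (Finset.mem_image_of_mem _ hp)
      have hcomp : ψ (T.fst e) (ψ p.1 p.2) = ψ (T.fst (e * p.1)) p.2 := by
        rw [fst_mul_left, map_mul]; rfl
      rw [hcomp, ← ContinuousLinearMap.sub_apply, ← map_sub, ← map_sub]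
      calc ‖v p • ψ (T.fst (p.1 - e * p.1)) p.2‖
          = ‖v p‖ * ‖ψ (T.fst (p.1 - e * p.1)) p.2‖ := norm_smul _ _
        _ ≤ ‖v p‖ * (‖ψ (T.fst (p.1 - e * p.1))‖ * ‖p.2‖) := by
            gcongr; exact ContinuousLinearMap.le_opNorm _ _
        _ ≤ ‖v p‖ * ((‖T.fst‖ * ε) * ‖p.2‖) := by
            gcongr
            refine (psi_norm_le ψ _).trans ?_
            exact (ContinuousLinearMap.le_opNorm _ _).trans (by gcongr)
        _ = ε * (‖v p‖ * (‖T.fst‖ * ‖p.2‖)) := by ring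
    have hdiff : ‖qm ψ T v - ψ (T.fst e) (pm ψ v)‖ ≤ ε * M := by
      have h1 : qm ψ T v - ψ (T.fst e) (pm ψ v)
          = ∑ p ∈ v.support, v p • (ψ (T.fst p.1) p.2 - ψ (T.fst e) (ψ p.1 p.2)) := by
        rw [qm, pm, Finsupp.linearCombination_apply, Finsupp.linearCombination_apply,
          Finsupp.sum, Finsupp.sum, map_sum, ← Finset.sum_sub_distrib]
        refine Finset.sum_congr rfl fun p _ => ?_
        rw [ContinuousLinearMap.map_smul, smul_sub]
      rw [h1, hM]
      refine (norm_sum_le _ _).trans ?_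
      rw [Finset.mul_sum]
      exact Finset.sum_le_sum hterm
    have hbound : ‖ψ (T.fst e) (pm ψ v)‖ ≤ ‖T.fst‖ * ‖pm ψ v‖ := by
      refine (ContinuousLinearMap.le_opNorm _ _).trans ?_
      gcongr
      refine (psi_norm_le ψ _).trans ?_
      calc ‖T.fst e‖ ≤ ‖T.fst‖ * ‖e‖ := ContinuousLinearMap.le_opNorm _ _
        _ ≤ ‖T.fst‖ * 1 := by gcongr
        _ = ‖T.fst‖ := mul_one _
    calc ‖qm ψ T v‖ ≤ ‖qm ψ T v - ψ (T.fst e) (pm ψ v)‖ + ‖ψ (T.fst e) (pm ψ v)‖ := by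
          simpa using norm_add_le (qm ψ T v - ψ (T.fst e) (pm ψ v)) (ψ (T.fst e) (pm ψ v))
      _ ≤ ε * M + (‖T.fst‖ * ‖pm ψ v‖) := add_le_add hdiff hbound
      _ = ‖T.fst‖ * ‖pm ψ v‖ + ε * M := add_comm _ _
  -- conclude
  by_cases hM' : M = 0
  · simpa [hM', mul_zero] using hmain 1 one_pos
  · have hMpos : 0 < M := lt_of_le_of_ne hM0 (Ne.symm hM')
    refine le_of_forall_pos_le_add fun δ hδ => ?_
    have := hmain (δ / M) (div_pos hδ hMpos)
    rwa [div_mul_cancel₀ _ hM'] at this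

end
section Construct
variable {A : Type*} [NonUnitalCStarAlgebra A]
variable {H : Type*} [NormedAddCommGroup H] [InnerProductSpace ℂ H] [CompleteSpace H]
variable (ψ : A →⋆ₙₐ[ℂ] (H →L[ℂ] H))

def incl : S ψ →L[ℂ] K ψ where
  toLinearMap := Submodule.inclusion (S_le_K ψ)
  cont := continuous_induced_rng.2 continuous_subtype_val

lemma denseRange_incl : DenseRange (incl ψ) := by
  refine IsInducing.subtypeVal.dense_iff.2 fun x => ?_
  convert show (x : H) ∈ closure (S ψ : Set H) from x.prop
  rw [← Set.range_comp]
  exact Set.ext fun y => ⟨by rintro ⟨y, rfl⟩; exact y.prop, fun hy => ⟨⟨y, hy⟩, rfl⟩⟩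

lemma isometry_incl : Isometry (incl ψ) := fun _ _ => rfl

lemma ker_le (T : 𝓜(ℂ, A)) : LinearMap.ker (pm ψ) ≤ LinearMap.ker (qm ψ T) := by
  intro v hv
  rw [LinearMap.mem_ker] at hv ⊢
  have h := key ψ T v
  rw [hv, norm_zero, mul_zero] at h
  exact norm_le_zero_iff.mp h

def g0 (T : 𝓜(ℂ, A)) : S ψ →ₗ[ℂ] H :=
  (Submodule.liftQ (LinearMap.ker (pm ψ)) (qm ψ T) (ker_le ψ T)) ∘ₗ
    ((LinearMap.quotKerEquivRange (pm ψ)).symm.toLinearMap ∘ₗ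
      (LinearEquiv.ofEq _ _ (range_pm ψ).symm).toLinearMap)

lemma g0_apply (T : 𝓜(ℂ, A)) (v : (A × H) →₀ ℂ) (h : pm ψ v ∈ S ψ) :
    g0 ψ T ⟨pm ψ v, h⟩ = qm ψ T v := by
  have h1 : (LinearEquiv.ofEq _ _ (range_pm ψ).symm) ⟨pm ψ v, h⟩
      = ⟨pm ψ v, LinearMap.mem_range_self _ v⟩ := rfl
  have h2 : (LinearMap.quotKerEquivRange (pm ψ)).symm ⟨pm ψ v, LinearMap.mem_range_self _ v⟩
      = Submodule.Quotient.mk v := by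
    rw [LinearEquiv.symm_apply_eq]
    exact Subtype.ext rfl
  have h3 : g0 ψ T ⟨pm ψ v, h⟩ = Submodule.liftQ (LinearMap.ker (pm ψ)) (qm ψ T) (ker_le ψ T)
      ((LinearMap.quotKerEquivRange (pm ψ)).symm
        ((LinearEquiv.ofEq _ _ (range_pm ψ).symm) ⟨pm ψ v, h⟩)) := rfl
  rw [h3, h1, h2, Submodule.liftQ_apply]

lemma g0_bound (T : 𝓜(ℂ, A)) (x : S ψ) : ‖g0 ψ T x‖ ≤ ‖T.fst‖ * ‖(x : H)‖ := by
  obtain ⟨xv, hxm⟩ := x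
  have hx : xv ∈ LinearMap.range (pm ψ) := (range_pm ψ).symm ▸ hxm
  obtain ⟨v, rfl⟩ := hx
  rw [g0_apply ψ T v hxm]
  exact key ψ T v

lemma qm_mem_S (T : 𝓜(ℂ, A)) (v : (A × H) →₀ ℂ) : qm ψ T v ∈ S ψ := by
  rw [qm, Finsupp.linearCombination_apply]
  exact Submodule.sum_smul_mem _ _ fun p _ => mem_S ψ _ _

def g1 (T : 𝓜(ℂ, A)) : S ψ →L[ℂ] H := LinearMap.mkContinuous (g0 ψ T) ‖T.fst‖ (g0_bound ψ T)

def g2 (T : 𝓜(ℂ, A)) : K ψ →L[ℂ] H :=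
  (g1 ψ T).extend (incl ψ)

lemma g2_incl (T : 𝓜(ℂ, A)) (x : S ψ) : g2 ψ T (incl ψ x) = g1 ψ T x :=
  ContinuousLinearMap.extend_eq _ (denseRange_incl ψ) (isometry_incl ψ).isUniformInducing _

def extOp (T : 𝓜(ℂ, A)) : H →L[ℂ] H := (g2 ψ T).comp (Submodule.orthogonalProjectionOnto (K ψ) : H →L[ℂ] K ψ)

lemma extOp_apply_gen (T : 𝓜(ℂ, A)) (a : A) (ξ : H) : extOp ψ T (ψ a ξ) = ψ (T.fst a) ξ := by
  have hproj : Submodule.orthogonalProjectionOnto (K ψ) (ψ a ξ) = ⟨ψ a ξ, mem_K ψ a ξ⟩ :=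
    Submodule.orthogonalProjectionOnto_mem_subspace_eq_self (⟨ψ a ξ, mem_K ψ a ξ⟩ : K ψ)
  show g2 ψ T (Submodule.orthogonalProjectionOnto (K ψ) (ψ a ξ)) = _
  rw [hproj]
  have h1 : (⟨ψ a ξ, mem_K ψ a ξ⟩ : K ψ) = incl ψ ⟨ψ a ξ, mem_S ψ a ξ⟩ := rfl
  rw [h1, g2_incl]
  show g0 ψ T ⟨ψ a ξ, mem_S ψ a ξ⟩ = _
  have hv : pm ψ (Finsupp.single (a, ξ) 1) = ψ a ξ := by simp [pm]
  have h2 : (⟨ψ a ξ, mem_S ψ a ξ⟩ : S ψ) = ⟨pm ψ (Finsupp.single (a, ξ) 1), hv ▸ mem_S ψ a ξ⟩ :=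
    Subtype.ext hv.symm
  rw [h2, g0_apply]
  simp [qm]

lemma extOp_orth (T : 𝓜(ℂ, A)) {m : H} (hm : m ∈ (K ψ)ᗮ) : extOp ψ T m = 0 := by
  show g2 ψ T (Submodule.orthogonalProjectionOnto (K ψ) m) = 0
  rw [Submodule.orthogonalProjectionOnto_apply_of_mem_orthogonal hm, map_zero]

lemma extOp_mem_K (T : 𝓜(ℂ, A)) (ξ : H) : extOp ψ T ξ ∈ K ψ := by
  suffices h : ∀ y : K ψ, g2 ψ T y ∈ K ψ from h _
  intro y
  refine (denseRange_incl ψ).induction_on y ?_ fun x => ?_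
  · exact IsClosed.preimage (g2 ψ T).continuous (Submodule.isClosed_topologicalClosure _)
  · rw [g2_incl]
    show g1 ψ T x ∈ K ψ
    obtain ⟨xv, hxm⟩ := x
    have hx : xv ∈ LinearMap.range (pm ψ) := (range_pm ψ).symm ▸ hxm
    obtain ⟨v, rfl⟩ := hx
    show g0 ψ T ⟨pm ψ v, hxm⟩ ∈ K ψ
    rw [g0_apply ψ T v hxm]
    exact S_le_K ψ (qm_mem_S ψ T v)

lemma eqOn_K {x y : H →L[ℂ] H} (h : ∀ (a : A) (ξ : H), x (ψ a ξ) = y (ψ a ξ)) :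
    ∀ k ∈ K ψ, x k = y k := by
  have hS : ∀ s ∈ S ψ, x s = y s := by
    intro s hs
    induction hs using Submodule.span_induction with
    | mem s hs => obtain ⟨p, rfl⟩ := hs; exact h p.1 p.2
    | zero => simp
    | add u v _ _ hu hv => simp [hu, hv]
    | smul c u _ hu => simp [hu]
  intro k hk
  have hk' : k ∈ closure (S ψ : Set H) := hk
  exact Set.EqOn.closure hS x.continuous y.continuous hk'

lemma uniq (T : 𝓜(ℂ, A)) {x y : H →L[ℂ] H}
    (hx1 : ∀ (a : A) (ξ : H), x (ψ a ξ) = ψ (T.fst a) ξ)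
    (hx2 : ∀ m ∈ (K ψ)ᗮ, x m = 0)
    (hy1 : ∀ (a : A) (ξ : H), y (ψ a ξ) = ψ (T.fst a) ξ)
    (hy2 : ∀ m ∈ (K ψ)ᗮ, y m = 0) : x = y := by
  ext ξ
  have hd : (Submodule.orthogonalProjectionOnto (K ψ) ξ : H) +
      (Submodule.orthogonalProjectionOnto (K ψ)ᗮ ξ : H) = ξ :=
      (K ψ).starProjection_add_starProjection_orthogonal ξ
  set k : H := (Submodule.orthogonalProjectionOnto (K ψ) ξ : H)
  set m : H := (Submodule.orthogonalProjectionOnto (K ψ)ᗮ ξ : H)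
  have hkK : k ∈ K ψ := SetLike.coe_mem _
  have hmO : m ∈ (K ψ)ᗮ := SetLike.coe_mem _
  have hxk : x k = y k := eqOn_K ψ (fun a ξ => (hx1 a ξ).trans (hy1 a ξ).symm) k hkK
  calc x ξ = x (k + m) := by rw [hd]
    _ = x k + x m := map_add _ _ _
    _ = y k + y m := by rw [hx2 m hmO, hy2 m hmO, hxk]
    _ = y (k + m) := (map_add _ _ _).symm
    _ = y ξ := by rw [hd]

end Construct

section Star
variable {A : Type*} [NonUnitalCStarAlgebra A]
variable {H : Type*} [NormedAddCommGroup H] [InnerProductSpace ℂ H] [CompleteSpace H]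
variable (ψ : A →⋆ₙₐ[ℂ] (H →L[ℂ] H))

local notation "⟪" x ", " y "⟫" => @inner ℂ _ _ x y

lemma star_eq_adjoint (x : H →L[ℂ] H) : star x = ContinuousLinearMap.adjoint x := rfl

lemma psi_star_apply (a : A) (ξ η : H) : ⟪ψ a ξ, η⟫ = ⟪ξ, ψ (star a) η⟫ := by
  rw [map_star, star_eq_adjoint]
  exact (ContinuousLinearMap.adjoint_inner_right _ _ _).symm

lemma psi_mul_apply (a b : A) (ξ : H) : ψ a (ψ b ξ) = ψ (a * b) ξ := by
  rw [map_mul]; rfl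

lemma psi_apply_orth (a : A) {m : H} (hm : m ∈ (K ψ)ᗮ) : ψ a m = 0 := by
  have h3 : ⟪ψ a m, ψ a m⟫ = 0 := by
    rw [psi_star_apply, psi_mul_apply]
    exact Submodule.inner_left_of_mem_orthogonal (mem_K ψ (star a * a) m) hm
  exact inner_self_eq_zero.mp h3

lemma psi_comp_extOp (T : 𝓜(ℂ, A)) (a : A) :
    ∀ k ∈ K ψ, ψ (star a) (extOp ψ T k) = ψ (T.snd (star a)) k := by
  refine eqOn_K ψ (x := (ψ (star a)).comp (extOp ψ T)) (y := ψ (T.snd (star a))) fun b η => ?_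
  show ψ (star a) (extOp ψ T (ψ b η)) = _
  rw [extOp_apply_gen, psi_mul_apply, ← T.central, ← psi_mul_apply]

lemma extOp_star (T : 𝓜(ℂ, A)) : extOp ψ (star T) = star (extOp ψ T) := by
  refine uniq ψ (star T) (extOp_apply_gen ψ (star T)) (fun m hm => extOp_orth ψ (star T) hm)
    ?_ ?_
  · intro a ξ
    rw [star_eq_adjoint]
    refine ext_inner_right ℂ fun v => ?_
    rw [ContinuousLinearMap.adjoint_inner_left]
    have hd : (Submodule.orthogonalProjectionOnto (K ψ) v : H) +
      (Submodule.orthogonalProjectionOnto (K ψ)ᗮ v : H) = v :=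
      (K ψ).starProjection_add_starProjection_orthogonal v
    set k : H := (Submodule.orthogonalProjectionOnto (K ψ) v : H)
    set m : H := (Submodule.orthogonalProjectionOnto (K ψ)ᗮ v : H)
    have hkK : k ∈ K ψ := SetLike.coe_mem _
    have hmO : m ∈ (K ψ)ᗮ := SetLike.coe_mem _
    have hXv : extOp ψ T v = extOp ψ T k := by
      conv_lhs => rw [← hd]
      rw [map_add, extOp_orth ψ T hmO, add_zero]
    rw [hXv]
    have h1 : ⟪ψ a ξ, extOp ψ T k⟫ = ⟪ξ, ψ (T.snd (star a)) k⟫ := by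
      rw [psi_star_apply]
      rw [psi_comp_extOp ψ T a k hkK]
    have h2 : ⟪ξ, ψ (T.snd (star a)) k⟫ = ⟪ψ (star (T.snd (star a))) ξ, k⟫ := by
      rw [psi_star_apply, star_star]
    have h3 : ⟪ψ ((star T).fst a) ξ, v⟫ = ⟪ψ (star (T.snd (star a))) ξ, k⟫ := by
      rw [DoubleCentralizer.star_fst]
      conv_lhs => rw [← hd]
      rw [inner_add_right,
        Submodule.inner_right_of_mem_orthogonal (mem_K ψ (star (T.snd (star a))) ξ) hmO,
        add_zero]
    rw [h1, h2, h3]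
  · intro m hm
    rw [star_eq_adjoint]
    refine ext_inner_right ℂ fun v => ?_
    rw [ContinuousLinearMap.adjoint_inner_left, inner_zero_left]
    exact Submodule.inner_left_of_mem_orthogonal (extOp_mem_K ψ T v) hm

lemma extOp_add (T T' : 𝓜(ℂ, A)) : extOp ψ (T + T') = extOp ψ T + extOp ψ T' := by
  refine uniq ψ (T + T') (extOp_apply_gen ψ (T + T')) (fun m hm => extOp_orth ψ (T + T') hm)
    ?_ ?_
  · intro a ξ
    rw [ContinuousLinearMap.add_apply, extOp_apply_gen, extOp_apply_gen,
      DoubleCentralizer.add_fst, ContinuousLinearMap.add_apply, map_add,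
      ContinuousLinearMap.add_apply]
  · intro m hm
    rw [ContinuousLinearMap.add_apply, extOp_orth ψ T hm, extOp_orth ψ T' hm, add_zero]

lemma extOp_smul (c : ℂ) (T : 𝓜(ℂ, A)) : extOp ψ (c • T) = c • extOp ψ T := by
  refine uniq ψ (c • T) (extOp_apply_gen ψ (c • T)) (fun m hm => extOp_orth ψ (c • T) hm)
    ?_ ?_
  · intro a ξ
    rw [ContinuousLinearMap.smul_apply, extOp_apply_gen, DoubleCentralizer.smul_fst,
      ContinuousLinearMap.smul_apply, map_smul, ContinuousLinearMap.smul_apply]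
  · intro m hm
    rw [ContinuousLinearMap.smul_apply, extOp_orth ψ T hm, smul_zero]

lemma extOp_mul (T T' : 𝓜(ℂ, A)) : extOp ψ (T * T') = extOp ψ T * extOp ψ T' := by
  refine uniq ψ (T * T') (extOp_apply_gen ψ (T * T')) (fun m hm => extOp_orth ψ (T * T') hm)
    ?_ ?_
  · intro a ξ
    rw [ContinuousLinearMap.mul_apply, extOp_apply_gen, extOp_apply_gen,
      DoubleCentralizer.mul_fst, ContinuousLinearMap.mul_apply]
  · intro m hm
    rw [ContinuousLinearMap.mul_apply, extOp_orth ψ T' hm, map_zero]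

lemma extOp_zero : extOp ψ (0 : 𝓜(ℂ, A)) = 0 := by
  refine uniq ψ 0 (extOp_apply_gen ψ 0) (fun m hm => extOp_orth ψ 0 hm) ?_ ?_
  · intro a ξ
    rw [DoubleCentralizer.zero_fst]
    simp
  · intro m hm
    rfl

lemma extOp_coe (a : A) : extOp ψ (DoubleCentralizer.coeHom (𝕜 := ℂ) a) = ψ a := by
  refine uniq ψ _ (extOp_apply_gen ψ _) (fun m hm => extOp_orth ψ _ hm) ?_ ?_
  · intro b ξ
    rw [psi_mul_apply]
    congr 1
  · intro m hm
    exact psi_apply_orth ψ a hm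

end Star

section VN
variable {A : Type*} [NonUnitalCStarAlgebra A]
variable {H : Type*} [NormedAddCommGroup H] [InnerProductSpace ℂ H] [CompleteSpace H]
variable (ψ : A →⋆ₙₐ[ℂ] (H →L[ℂ] H))

local notation "⟪" x ", " y "⟫" => @inner ℂ _ _ x y

lemma mapsTo_K {y : H →L[ℂ] H} (hy : ∀ a : A, ψ a * y = y * ψ a) :
    ∀ k ∈ K ψ, y k ∈ K ψ := by
  have hS : ∀ s ∈ S ψ, y s ∈ S ψ := by
    intro s hs
    induction hs using Submodule.span_induction with
    | mem s hs =>
      obtain ⟨p, rfl⟩ := hs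
      have h1 : y (ψ p.1 p.2) = ψ p.1 (y p.2) := by
        have := congrArg (fun z => z p.2) (hy p.1)
        simpa [ContinuousLinearMap.mul_apply] using this.symm
      rw [h1]
      exact mem_S ψ _ _
    | zero => simpa using Submodule.zero_mem _
    | add u v _ _ hu hv => rw [map_add]; exact Submodule.add_mem _ hu hv
    | smul c u _ hu => rw [map_smul]; exact Submodule.smul_mem _ _ hu
  intro k hk
  have hk' : k ∈ closure (S ψ : Set H) := hk
  have h1 : y k ∈ y '' closure (S ψ : Set H) := Set.mem_image_of_mem _ hk'
  have h2 : y '' closure (S ψ : Set H) ⊆ closure (y '' (S ψ : Set H)) :=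
    image_closure_subset_closure_image y.continuous
  have h3 : closure (y '' (S ψ : Set H)) ⊆ closure (S ψ : Set H) := by
    refine closure_minimal ?_ isClosed_closure
    rintro z ⟨s, hs, rfl⟩
    exact subset_closure (hS s hs)
  exact h3 (h2 h1)

lemma mapsTo_orth {y : H →L[ℂ] H} (hystar : ∀ a : A, ψ a * star y = star y * ψ a) :
    ∀ m ∈ (K ψ)ᗮ, y m ∈ (K ψ)ᗮ := by
  intro m hm
  rw [Submodule.mem_orthogonal]
  intro u hu
  have h1 : ⟪u, y m⟫ = ⟪star y u, m⟫ := by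
    rw [star_eq_adjoint]
    exact (ContinuousLinearMap.adjoint_inner_left _ _ _).symm
  rw [h1]
  exact Submodule.inner_right_of_mem_orthogonal (mapsTo_K ψ hystar u hu) hm

lemma extOp_mem (B : VonNeumannAlgebra H) (hψB : ∀ a : A, ψ a ∈ B) (T : 𝓜(ℂ, A)) :
    extOp ψ T ∈ B := by
  have key : ∀ y ∈ Set.centralizer (B : Set (H →L[ℂ] H)), y * extOp ψ T = extOp ψ T * y := by
    intro y hy
    have hy' : ∀ a : A, ψ a * y = y * ψ a := fun a =>
      Set.mem_centralizer_iff.mp hy (ψ a) (hψB a)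
    have hystar' : star y ∈ Set.centralizer (B : Set (H →L[ℂ] H)) := by
      rw [Set.mem_centralizer_iff] at hy ⊢
      intro m hmB
      have h1 : star m ∈ B := star_mem hmB
      have h2 := hy (star m) h1
      calc m * star y = star (y * star m) := by rw [star_mul, star_star]
        _ = star (star m * y) := by rw [h2]
        _ = star y * m := by rw [star_mul, star_star]
    have hystar : ∀ a : A, ψ a * star y = star y * ψ a := fun a =>
      Set.mem_centralizer_iff.mp hystar' (ψ a) (hψB a)
    have hyy : ∀ a : A, ψ a * star (star y) = star (star y) * ψ a := by
      simpa [star_star] using hy'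
    -- agreement on K
    have hK : ∀ k ∈ K ψ, y (extOp ψ T k) = extOp ψ T (y k) := by
      refine eqOn_K ψ (x := y.comp (extOp ψ T)) (y := (extOp ψ T).comp y) fun a ξ => ?_
      show y (extOp ψ T (ψ a ξ)) = extOp ψ T (y (ψ a ξ))
      have h1 : y (ψ a ξ) = ψ a (y ξ) := by
        have := congrArg (fun z => z ξ) (hy' a)
        simpa [ContinuousLinearMap.mul_apply] using this.symm
      rw [extOp_apply_gen, h1, extOp_apply_gen]
      have := congrArg (fun z => z ξ) (hy' (T.fst a))
      simpa [ContinuousLinearMap.mul_apply] using this.symm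
    ext ξ
    have hd : (Submodule.orthogonalProjectionOnto (K ψ) ξ : H) +
      (Submodule.orthogonalProjectionOnto (K ψ)ᗮ ξ : H) = ξ :=
      (K ψ).starProjection_add_starProjection_orthogonal ξ
    set k : H := (Submodule.orthogonalProjectionOnto (K ψ) ξ : H)
    set m : H := (Submodule.orthogonalProjectionOnto (K ψ)ᗮ ξ : H)
    have hkK : k ∈ K ψ := SetLike.coe_mem _
    have hmO : m ∈ (K ψ)ᗮ := SetLike.coe_mem _
    have hym : y m ∈ (K ψ)ᗮ := mapsTo_orth ψ hystar m hmO
    show y (extOp ψ T ξ) = extOp ψ T (y ξ)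
    conv_lhs => rw [← hd]
    conv_rhs => rw [← hd]
    rw [map_add (extOp ψ T), extOp_orth ψ T hmO, add_zero, map_add y, map_add (extOp ψ T),
      extOp_orth ψ T hym, add_zero]
    exact hK k hkK
  have : extOp ψ T ∈ Set.centralizer (Set.centralizer (B : Set (H →L[ℂ] H))) := by
    rw [Set.mem_centralizer_iff]
    exact key
  rwa [B.centralizer_centralizer] at this

end VN

end MulExt

/-- **Lemmas 2.8 and 2.9.** An injective star-homomorphism `φ` from a commutative non-unital
C*-algebra `A` (with no unit) into an abelian von Neumann algebra `B` extends to an injective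
star-homomorphism `φ̃` on the multiplier algebra `𝓜(ℂ, A)`; moreover the range of `φ̃` meets
every two-sided ideal of `B` intersecting `range φ` trivially only at `0`. -/
theorem exists_injective_extension_to_multiplier_algebra
    {A : Type*} [NonUnitalCommCStarAlgebra A]
    (hA : ¬ ∃ e : A, ∀ a : A, e * a = a)
    {H : Type*} [NormedAddCommGroup H] [InnerProductSpace ℂ H] [CompleteSpace H]
    (B : VonNeumannAlgebra H)
    (hcomm : ∀ x ∈ B, ∀ y ∈ B, x * y = y * x)
    (φ : A →⋆ₙₐ[ℂ] B.toStarSubalgebra) (hφ : Function.Injective φ) :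
    ∃ φt : 𝓜(ℂ, A) →⋆ₙₐ[ℂ] B.toStarSubalgebra,
      Function.Injective φt ∧
      (∀ a : A, φt (DoubleCentralizer.coeHom (𝕜 := ℂ) a) = φ a) ∧
      ∀ I : TwoSidedIdeal B.toStarSubalgebra,
        (I : Set B.toStarSubalgebra) ∩ Set.range φ = {0} →
          Set.range φt ∩ (I : Set B.toStarSubalgebra) = {0} := by
  classical
  set ψ : A →⋆ₙₐ[ℂ] (H →L[ℂ] H) :=
    (B.toStarSubalgebra.subtype.toNonUnitalStarAlgHom).comp φ with hψdef
  have hψB : ∀ a : A, ψ a ∈ B := fun a => (φ a).2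
  have hmem : ∀ T : 𝓜(ℂ, A), MulExt.extOp ψ T ∈ B.toStarSubalgebra := fun T =>
    MulExt.extOp_mem ψ B hψB T
  set φt : 𝓜(ℂ, A) →⋆ₙₐ[ℂ] B.toStarSubalgebra :=
    { toFun := fun T => (⟨MulExt.extOp ψ T, hmem T⟩ : B.toStarSubalgebra)
      map_smul' := fun c T => Subtype.ext (MulExt.extOp_smul ψ c T)
      map_zero' := Subtype.ext (MulExt.extOp_zero ψ)
      map_add' := fun T T' => Subtype.ext (MulExt.extOp_add ψ T T')
      map_mul' := fun T T' => Subtype.ext (MulExt.extOp_mul ψ T T')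
      map_star' := fun T => Subtype.ext (MulExt.extOp_star ψ T) } with hφt
  have hφtval : ∀ T : 𝓜(ℂ, A), (φt T : H →L[ℂ] H) = MulExt.extOp ψ T := fun T => rfl
  have hinj : Function.Injective φt := by
    intro T T' h
    have hval : MulExt.extOp ψ T = MulExt.extOp ψ T' := congrArg Subtype.val h
    have hfst : ∀ a : A, T.fst a = T'.fst a := by
      intro a
      apply hφ
      apply Subtype.ext
      show ψ (T.fst a) = ψ (T'.fst a)
      ext ξ
      rw [← MulExt.extOp_apply_gen ψ T a ξ, ← MulExt.extOp_apply_gen ψ T' a ξ, hval]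
    have hsub : T - T' = 0 := by
      apply MulExt.fst_eq_zero
      intro a
      rw [DoubleCentralizer.sub_fst, ContinuousLinearMap.sub_apply, hfst, sub_self]
    exact sub_eq_zero.mp hsub
  refine ⟨φt, hinj, fun a => Subtype.ext (MulExt.extOp_coe ψ a), ?_⟩
  intro I hI
  ext x
  simp only [Set.mem_inter_iff, Set.mem_singleton_iff]
  constructor
  · rintro ⟨⟨T, rfl⟩, hxI⟩
    have hTa : ∀ a : A, T.fst a = 0 := by
      intro a
      have hmul : φt T * φ a ∈ I := I.mul_mem_right _ _ hxI
      have heq : φt T * φ a = φ (T.fst a) := by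
        apply Subtype.ext
        show (MulExt.extOp ψ T) * (ψ a) = ψ (T.fst a)
        ext ξ
        rw [ContinuousLinearMap.mul_apply, MulExt.extOp_apply_gen]
      have hx0 : φ (T.fst a) ∈ (I : Set B.toStarSubalgebra) ∩ Set.range φ :=
        ⟨heq ▸ hmul, ⟨_, rfl⟩⟩
      rw [hI] at hx0
      apply hφ
      rw [hx0, map_zero]
    have hT0 : T = 0 := MulExt.fst_eq_zero T hTa
    rw [hT0, map_zero]
  · rintro rfl
    exact ⟨⟨0, map_zero φt⟩, I.zero_mem⟩
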